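/- Let W be a finite reflection group acting on a Euclidean space V (real vector space with a positive definite symmetric bilinear form). For any w ∈ W written as a product of reflections w = s_{a_1}⋯s_{a_r} in roots a_1,…,a_r, one has Im(id − w) ⊆ Span(a_1,…,a_r); moreover if the a_i are linearly independent then dim Im(id − w) = r. -/

import Mathlib

open scoped RealInnerProductSpace
open Module

/-- The reflection in a root `a`: `s_a(x) = x - 2(⟪x,a⟫/⟪a,a⟫) • a`. -/
noncomputable def sR {V : Type} [NormedAddCommGroup V] [InnerProductSpace ℝ V]
    (a x : V) : V :=
  x - (2 * ⟪x, a⟫ / ⟪a, a⟫) • a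

section aux
variable {V : Type} [NormedAddCommGroup V] [InnerProductSpace ℝ V]

/-- `sR b` as a linear map. -/
noncomputable def sL (b : V) : V →ₗ[ℝ] V where
  toFun x := sR b x
  map_add' x y := by
    simp only [sR, inner_add_left]
    match_scalars <;> ring
  map_smul' c x := by
    simp only [sR, real_inner_smul_left, RingHom.id_apply]
    match_scalars <;> ring

lemma sR_fix (b x : V) (h : ⟪x, b⟫ = 0) : sR b x = x := by
  simp [sR, h]

lemma sR_invol (b : V) (hb : b ≠ 0) (x : V) : sR b (sR b x) = x := by
  have h : ⟪b, b⟫ ≠ (0:ℝ) := inner_self_ne_zero.mpr hb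
  simp only [sR, inner_sub_left, inner_smul_left, RCLike.ofReal_real_eq_id, id_eq]
  match_scalars
  · ring
  · simp only [conj_trivial]
    field_simp
    ring

lemma lemA (l : List V) (x : V) :
    x - l.foldr sR x ∈ Submodule.span ℝ {v | v ∈ l} := by
  induction l generalizing x with
  | nil => simp
  | cons b t ih =>
    have key : x - (b :: t).foldr sR x
        = (x - t.foldr sR x) + (2 * ⟪t.foldr sR x, b⟫ / ⟪b, b⟫) • b := by
      simp only [List.foldr_cons, sR]; abel
    rw [key]
    refine Submodule.add_mem _ (Submodule.span_mono (fun v hv => List.mem_cons_of_mem b hv) (ih x))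
      (Submodule.smul_mem _ _ (Submodule.subset_span List.mem_cons_self))

lemma lemB (r : ℕ) (a : Fin r → V) (hli : LinearIndependent ℝ a) (x : V)
    (hx : (List.ofFn a).foldr sR x = x) : ∀ i, ⟪x, a i⟫ = 0 := by
  induction r with
  | zero => exact fun i => i.elim0
  | succ n ih =>
    have hb : a 0 ≠ 0 := hli.ne_zero 0
    have hbb : ⟪a 0, a 0⟫ ≠ (0:ℝ) := inner_self_ne_zero.mpr hb
    rw [← Fin.cons_self_tail a, linearIndependent_fin_cons] at hli
    have hofn : List.ofFn a = a 0 :: List.ofFn (Fin.tail a) := by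
      rw [List.ofFn_succ]; rfl
    rw [hofn, List.foldr_cons] at hx
    -- hx : sR (a 0) (y) = x  where y = foldr on tail
    set y := (List.ofFn (Fin.tail a)).foldr sR x with hy
    have hyx : y = sR (a 0) x := by
      rw [← hx, sR_invol _ hb]
    have hmem : x - y ∈ Submodule.span ℝ (Set.range (Fin.tail a)) := by
      have := lemA (List.ofFn (Fin.tail a)) x
      have hset : {v | v ∈ List.ofFn (Fin.tail a)} = Set.range (Fin.tail a) := by
        ext v; exact List.mem_ofFn
      rwa [hset] at this
    have hxy : x - y = (2 * ⟪x, a 0⟫ / ⟪a 0, a 0⟫) • a 0 := by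
      rw [hyx, sR, sub_sub_cancel]
    have hc : 2 * ⟪x, a 0⟫ / ⟪a 0, a 0⟫ = 0 := by
      by_contra hc
      exact hli.2 (by
        have : a 0 = (2 * ⟪x, a 0⟫ / ⟪a 0, a 0⟫)⁻¹ • ((2 * ⟪x, a 0⟫ / ⟪a 0, a 0⟫) • a 0) := by
          rw [inv_smul_smul₀ hc]
        rw [this, ← hxy]
        exact Submodule.smul_mem _ _ hmem)
    have h0 : ⟪x, a 0⟫ = 0 := by
      rcases div_eq_zero_iff.mp hc with h | h
      · linarith
      · exact absurd h hbb
    have hyx' : y = x := by rw [hyx, sR_fix _ _ h0]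
    have htail := ih (Fin.tail a) hli.1 (by rw [← hy, hyx'])
    intro i
    rcases i.eq_zero_or_eq_succ with rfl | ⟨j, rfl⟩
    · exact h0
    · exact htail j

lemma foldr_eq_prod (l : List V) (x : V) :
    l.foldr sR x = (l.map sL).prod x := by
  induction l with
  | nil => simp
  | cons b t ih => simp [List.foldr_cons, ih, sL]

end aux

theorem statement13 (V : Type) [NormedAddCommGroup V] [InnerProductSpace ℝ V]
    [FiniteDimensional ℝ V]
    (r : ℕ) (a : Fin r → V) (ha : ∀ i, a i ≠ 0)
    (w : V → V) (hw : w = fun x => (List.ofFn a).foldr sR x) :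
    (∀ x : V, x - w x ∈ Submodule.span ℝ (Set.range a)) ∧
    (LinearIndependent ℝ a →
      Module.finrank ℝ (Submodule.span ℝ (Set.range (fun x => x - w x))) = r) := by
  have hset : {v | v ∈ List.ofFn a} = Set.range a := by
    ext v; exact List.mem_ofFn
  have part1 : ∀ x : V, x - w x ∈ Submodule.span ℝ (Set.range a) := by
    intro x
    rw [hw]
    have := lemA (List.ofFn a) x
    rwa [hset] at this
  refine ⟨part1, fun hli => ?_⟩
  set wL : V →ₗ[ℝ] V := ((List.ofFn a).map sL).prod with hwL
  have hwfun : ∀ x, w x = wL x := by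
    intro x; rw [hw]; exact foldr_eq_prod _ x
  set T : V →ₗ[ℝ] V := LinearMap.id - wL with hT
  have hTfun : (fun x => x - w x) = ⇑T := by
    funext x; simp [hT, hwfun x]
  rw [hTfun, ← LinearMap.coe_range, Submodule.span_eq]
  set K := Submodule.span ℝ (Set.range a) with hK
  have hKr : finrank ℝ K = r := by
    rw [hK, finrank_span_eq_card hli, Fintype.card_fin]
  have hrange : LinearMap.range T ≤ K := by
    rintro y ⟨x, rfl⟩
    have : T x = x - w x := by simp [hT, hwfun x]
    rw [this]; exact part1 x
  have hker : LinearMap.ker T ≤ Kᗮ := by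
    intro x hx
    have hxw : w x = x := by
      have : x - wL x = 0 := hx
      have := sub_eq_zero.mp this
      rw [hwfun]; exact this.symm
    have horth : ∀ i, ⟪x, a i⟫ = 0 := lemB r a hli x (by simp only [hw] at hxw; exact hxw)
    rw [Submodule.mem_orthogonal]
    intro u hu
    induction hu using Submodule.span_induction with
    | mem u hu => rcases hu with ⟨i, rfl⟩; rw [real_inner_comm]; exact horth i
    | zero => simp
    | add u v _ _ hu hv => rw [inner_add_left, hu, hv, add_zero]
    | smul c u _ hu => rw [inner_smul_left, hu]; simp
  have h1 := LinearMap.finrank_range_add_finrank_ker T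
  have h2 := Submodule.finrank_add_finrank_orthogonal K
  have h3 : finrank ℝ (LinearMap.ker T) ≤ finrank ℝ Kᗮ := Submodule.finrank_mono hker
  have h4 : finrank ℝ (LinearMap.range T) ≤ finrank ℝ K := Submodule.finrank_mono hrange
  omega
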